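/- Let k ∈ ℕ, let x₁,…,x_{2k} ∈ ℂ be distinct, and let ξ ∈ {−1,+1}^{2k} with ∑_{i=1}^{2k} ξ_i = 0. Set P := {i : ξ_i = +1} and N := {i : ξ_i = −1} (so |P| = |N| = k). Then ∏_{1≤i<j≤2k} |x_i−x_j|^{ξ_iξ_j/4} ≤ ∑_{π} ∏_{i∈P} |x_i − x_{π(i)}|^{−1/4}, where the sum is over all bijections π : P → N. -/

import Mathlib

open Finset Matrix NNReal

private lemma key_frac (u v : ℂ) (hu : u ≠ 0) (hv : v ≠ 0) :
    u⁻¹ = (v - u) * (u⁻¹ * v⁻¹) + 1 * v⁻¹ := by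
  field_simp; ring

theorem cauchy_det : ∀ (n : ℕ) (a b : Fin n → ℂ), (∀ i j, a i - b j ≠ 0) →
    (Matrix.of fun i j => (a i - b j)⁻¹).det
      = (∏ i, ∏ j ∈ Ioi i, ((a j - a i) * (b i - b j))) / ∏ i, ∏ j, (a i - b j) := by
  intro n
  induction n with
  | zero =>
    intro a b _
    simp [Matrix.det_fin_zero]
  | succ n ih =>
    intro a b hd
    -- Step 1: subtract row 0 from the other rows
    have step1 : (Matrix.of fun i j => (a i - b j)⁻¹).det =
        (Matrix.of fun i j : Fin (n+1) => if i = 0 then (a 0 - b j)⁻¹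
          else (a 0 - a i) * ((a i - b j)⁻¹ * (a 0 - b j)⁻¹)).det := by
      apply det_eq_of_forall_row_eq_smul_add_const (fun i => if i = 0 then 0 else (1:ℂ)) 0 (by simp)
      intro i j
      by_cases hi : i = 0
      · simp [hi]
      · simp only [Matrix.of_apply, if_neg hi, if_pos rfl]
        rw [show a 0 - a i = (a 0 - b j) - (a i - b j) by ring]
        exact key_frac _ _ (hd i j) (hd 0 j)
    -- Step 2: pull out column factors (a 0 - b j)⁻¹
    have step2 : (Matrix.of fun i j : Fin (n+1) => if i = 0 then (a 0 - b j)⁻¹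
          else (a 0 - a i) * ((a i - b j)⁻¹ * (a 0 - b j)⁻¹)).det =
        (∏ j, (a 0 - b j)⁻¹) *
        (Matrix.of fun i j : Fin (n+1) => if i = 0 then 1
          else (a 0 - a i) * (a i - b j)⁻¹).det := by
      rw [← Matrix.det_mul_row (fun j => (a 0 - b j)⁻¹)]
      congr 1
      ext i j
      by_cases hi : i = 0 <;> simp [hi] <;> ring
    -- Step 3: pull out row factors (a 0 - a i)
    have step3 : (Matrix.of fun i j : Fin (n+1) => if i = 0 then 1
          else (a 0 - a i) * (a i - b j)⁻¹).det =
        (∏ i, (if i = 0 then 1 else (a 0 - a i))) *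
        (Matrix.of fun i j : Fin (n+1) => if i = 0 then 1 else (a i - b j)⁻¹).det := by
      rw [← Matrix.det_mul_column (fun i => if i = 0 then 1 else (a 0 - a i))]
      congr 1
      ext i j
      by_cases hi : i = 0 <;> simp [hi]
    -- Step 4: subtract column 0 from the other columns
    have step4 : (Matrix.of fun i j : Fin (n+1) => if i = 0 then 1
          else (a i - b j)⁻¹).det =
        (Matrix.of fun i j : Fin (n+1) =>
          if i = 0 then (if j = 0 then 1 else 0)
          else (if j = 0 then (a i - b 0)⁻¹
            else (b j - b 0) * ((a i - b j)⁻¹ * (a i - b 0)⁻¹))).det := by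
      rw [← Matrix.det_transpose, ← Matrix.det_transpose (Matrix.of fun i j : Fin (n+1) =>
          if i = 0 then (if j = 0 then 1 else 0)
          else (if j = 0 then (a i - b 0)⁻¹
            else (b j - b 0) * ((a i - b j)⁻¹ * (a i - b 0)⁻¹)))]
      apply det_eq_of_forall_row_eq_smul_add_const (fun j => if j = 0 then 0 else (1:ℂ)) 0 (by simp)
      intro j i
      simp only [Matrix.transpose_apply, Matrix.of_apply]
      by_cases hj : j = 0
      · simp [hj]
      · by_cases hi : i = 0
        · simp [hj, hi]
        · simp only [if_neg hj, if_neg hi, if_pos rfl]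
          rw [show b j - b 0 = (a i - b 0) - (a i - b j) by ring]
          exact key_frac _ _ (hd i j) (hd i 0)
    -- Step 5: expand along the first row
    have step5 : (Matrix.of fun i j : Fin (n+1) =>
          if i = 0 then (if j = 0 then 1 else 0)
          else (if j = 0 then (a i - b 0)⁻¹
            else (b j - b 0) * ((a i - b j)⁻¹ * (a i - b 0)⁻¹))).det =
        (Matrix.of fun i j : Fin n =>
          (b j.succ - b 0) * ((a i.succ - b j.succ)⁻¹ * (a i.succ - b 0)⁻¹)).det := by
      rw [Matrix.det_succ_row_zero, Fin.sum_univ_succ]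
      simp only [Matrix.of_apply, if_pos rfl, Fin.succ_ne_zero, if_neg, Fin.val_zero, pow_zero,
        one_mul, mul_zero, zero_mul, Finset.sum_const_zero, add_zero, if_true]
      rw [Fin.succAbove_zero]
      simp only [if_false, mul_zero, zero_mul, Finset.sum_const_zero, add_zero]
      refine congrArg Matrix.det ?_
      ext i j
      simp [Matrix.submatrix_apply, Fin.succ_ne_zero]
    -- Step 6: pull out factors and use the induction hypothesis
    have step6 : (Matrix.of fun i j : Fin n =>
          (b j.succ - b 0) * ((a i.succ - b j.succ)⁻¹ * (a i.succ - b 0)⁻¹)).det =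
        (∏ j : Fin n, (b j.succ - b 0)) * ((∏ i : Fin n, (a i.succ - b 0)⁻¹) *
          ((∏ i : Fin n, ∏ j ∈ Ioi i, ((a j.succ - a i.succ) * (b i.succ - b j.succ))) /
            ∏ i : Fin n, ∏ j : Fin n, (a i.succ - b j.succ))) := by
      rw [← ih (fun i => a i.succ) (fun j => b j.succ) (fun i j => hd i.succ j.succ)]
      rw [← Matrix.det_mul_column (fun i : Fin n => (a i.succ - b 0)⁻¹)]
      rw [← Matrix.det_mul_row (fun j : Fin n => (b j.succ - b 0))]
      congr 1
      ext i j
      simp only [Matrix.of_apply]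
      ring
    rw [step1, step2, step3, step4, step5, step6]
    have hP1 : (∏ j, (a 0 - b j)) ≠ 0 := Finset.prod_ne_zero_iff.mpr fun j _ => hd 0 j
    have hP4 : (∏ i : Fin n, (a i.succ - b 0)) ≠ 0 :=
      Finset.prod_ne_zero_iff.mpr fun i _ => hd i.succ 0
    have hQA : (∏ i : Fin n, ∏ j : Fin n, (a i.succ - b j.succ)) ≠ 0 :=
      Finset.prod_ne_zero_iff.mpr fun i _ =>
        Finset.prod_ne_zero_iff.mpr fun j _ => hd i.succ j.succ
    rw [Fin.prod_univ_succ (fun i => ∏ j ∈ Ioi i, ((a j - a i) * (b i - b j)))]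
    rw [Fin.prod_univ_succ (fun i => ∏ j, (a i - b j))]
    have hif : (∏ i : Fin (n+1), if i = 0 then 1 else a 0 - a i)
        = ∏ i : Fin n, (a 0 - a i.succ) := by
      rw [Fin.prod_univ_succ]; simp [Fin.succ_ne_zero]
    have hsplit : (∏ i : Fin n, ∏ j : Fin (n+1), (a i.succ - b j))
        = (∏ i : Fin n, (a i.succ - b 0)) * ∏ i : Fin n, ∏ j : Fin n, (a i.succ - b j.succ) := by
      rw [← Finset.prod_mul_distrib]
      exact Finset.prod_congr rfl fun i _ => Fin.prod_univ_succ _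
    have hIoi0 : (∏ j ∈ Ioi (0 : Fin (n+1)), ((a j - a 0) * (b 0 - b j)))
        = (∏ i : Fin n, (a 0 - a i.succ)) * ∏ i : Fin n, (b i.succ - b 0) := by
      rw [Fin.prod_Ioi_zero, ← Finset.prod_mul_distrib]
      exact Finset.prod_congr rfl fun i _ => by ring
    have hIois : (∏ i : Fin n, ∏ j ∈ Ioi (Fin.succ i), ((a j - a i.succ) * (b i.succ - b j)))
        = ∏ i : Fin n, ∏ j ∈ Ioi i, ((a j.succ - a i.succ) * (b i.succ - b j.succ)) :=
      Finset.prod_congr rfl fun i _ => Fin.prod_Ioi_succ _ _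
    rw [hif, hsplit, hIoi0, hIois, Finset.prod_inv_distrib, Finset.prod_inv_distrib]
    field_simp

lemma sq_prod_Ioi {n : ℕ} (f : Fin n → Fin n → ℝ) (hf : ∀ i j, f i j = f j i) :
    (∏ i, ∏ j ∈ Ioi i, f i j) ^ 2 = ∏ i, ∏ j ∈ {i}ᶜ, f i j := by
  have h := Finset.prod_prod_Ioi_mul_eq_prod_prod_off_diag f
  calc (∏ i, ∏ j ∈ Ioi i, f i j) ^ 2 = ∏ i, ∏ j ∈ Ioi i, (f j i * f i j) := by
        rw [← Finset.prod_pow]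
        refine Finset.prod_congr rfl fun i _ => ?_
        rw [← Finset.prod_pow]
        refine Finset.prod_congr rfl fun j _ => ?_
        rw [sq, hf i j]
    _ = ∏ i, ∏ j ∈ {i}ᶜ, f j i :=
        h.trans (Finset.prod_congr rfl fun i _ =>
          Finset.prod_congr (by ext x; simp) (fun _ _ => rfl))
    _ = ∏ i, ∏ j ∈ {i}ᶜ, f i j :=
        Finset.prod_congr rfl fun i _ => Finset.prod_congr rfl fun j _ => hf j i

lemma rpow_add_le' (a b : ℝ) (ha : 0 ≤ a) (hb : 0 ≤ b) :
    (a + b) ^ ((1:ℝ)/4) ≤ a ^ ((1:ℝ)/4) + b ^ ((1:ℝ)/4) := by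
  have h := NNReal.rpow_add_le_add_rpow a.toNNReal b.toNNReal (p := (1:ℝ)/4)
    (by norm_num) (by norm_num)
  have h2 : ((a.toNNReal + b.toNNReal : ℝ≥0) : ℝ) = a + b := by
    simp [Real.coe_toNNReal _ ha, Real.coe_toNNReal _ hb]
  calc (a + b) ^ ((1:ℝ)/4) = (((a.toNNReal + b.toNNReal : ℝ≥0) : ℝ)) ^ ((1:ℝ)/4) := by rw [h2]
    _ = (((a.toNNReal + b.toNNReal) ^ ((1:ℝ)/4) : ℝ≥0) : ℝ) := by
        rw [NNReal.coe_rpow]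
    _ ≤ ((a.toNNReal ^ ((1:ℝ)/4) + b.toNNReal ^ ((1:ℝ)/4) : ℝ≥0) : ℝ) := by
        exact_mod_cast h
    _ = a ^ ((1:ℝ)/4) + b ^ ((1:ℝ)/4) := by
        push_cast [NNReal.coe_rpow, Real.coe_toNNReal _ ha, Real.coe_toNNReal _ hb]
        rfl

lemma rpow_sum_le {ι : Type*} (s : Finset ι) (f : ι → ℝ) (hf : ∀ a ∈ s, 0 ≤ f a) :
    (∑ a ∈ s, f a) ^ ((1:ℝ)/4) ≤ ∑ a ∈ s, f a ^ ((1:ℝ)/4) := by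
  induction s using Finset.cons_induction with
  | empty => simp [Real.zero_rpow (by norm_num : ((1:ℝ)/4) ≠ 0)]
  | cons a s ha ih =>
    rw [Finset.sum_cons, Finset.sum_cons]
    have h1 : 0 ≤ f a := hf a (Finset.mem_cons_self a s)
    have h2 : 0 ≤ ∑ b ∈ s, f b :=
      Finset.sum_nonneg fun b hb => hf b (Finset.mem_cons_of_mem hb)
    calc (f a + ∑ b ∈ s, f b) ^ ((1:ℝ)/4)
        ≤ f a ^ ((1:ℝ)/4) + (∑ b ∈ s, f b) ^ ((1:ℝ)/4) := rpow_add_le' _ _ h1 h2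
      _ ≤ f a ^ ((1:ℝ)/4) + ∑ b ∈ s, f b ^ ((1:ℝ)/4) := by
          gcongr
          exact ih fun b hb => hf b (Finset.mem_cons_of_mem hb)

lemma prod_split_sign {M : ℕ} (ξ : Fin M → ℤ) (hξ : ∀ i, ξ i = -1 ∨ ξ i = 1)
    (u : Fin M → ℝ) :
    ∏ i, u i = (∏ p : {j // ξ j = 1}, u p.1) * ∏ q : {j // ξ j = -1}, u q.1 := by
  rw [← Finset.prod_filter_mul_prod_filter_not univ (fun j => ξ j = 1)]
  congr 1
  · rw [Finset.prod_subtype (univ.filter fun j => ξ j = 1) (p := fun j => ξ j = 1) (by simp) u]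
  · rw [Finset.prod_subtype (univ.filter fun j => ¬ ξ j = 1)
      (p := fun j => ξ j = -1) ?_ u]
    intro j
    simp only [Finset.mem_filter, Finset.mem_univ, true_and]
    rcases hξ j with h | h <;> simp [h]

lemma prod_compl_pos {M : ℕ} (ξ : Fin M → ℤ) (hξ : ∀ i, ξ i = -1 ∨ ξ i = 1)
    (i : Fin M) (hi : ξ i = 1) (w : Fin M → ℝ) :
    ∏ j ∈ {i}ᶜ, w j =
      (∏ p ∈ ({(⟨i, hi⟩ : {j // ξ j = 1})}ᶜ : Finset {j // ξ j = 1}), w p.1)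
        * ∏ q : {j // ξ j = -1}, w q.1 := by
  rw [← Finset.prod_filter_mul_prod_filter_not ({i}ᶜ) (fun j => ξ j = 1)]
  congr 1
  · refine (Finset.prod_bij (fun p _ => p.1) ?_ ?_ ?_ (fun _ _ => rfl)).symm
    · intro p hp
      simp only [Finset.mem_compl, Finset.mem_singleton] at hp
      simp only [Finset.mem_filter, Finset.mem_compl, Finset.mem_singleton]
      exact ⟨fun h => hp (Subtype.ext h), p.2⟩
    · intro p _ p' _ h
      exact Subtype.ext h
    · intro j hj
      simp only [Finset.mem_filter, Finset.mem_compl, Finset.mem_singleton] at hj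
      exact ⟨⟨j, hj.2⟩, by simp [Subtype.ext_iff, hj.1], rfl⟩
  · rw [Finset.prod_subtype (({i}ᶜ : Finset (Fin M)).filter fun j => ¬ ξ j = 1)
      (p := fun j => ξ j = -1) ?_ w]
    intro j
    simp only [Finset.mem_filter, Finset.mem_compl, Finset.mem_singleton]
    constructor
    · rintro ⟨-, h⟩
      rcases hξ j with h' | h' <;> simp_all
    · intro h
      refine ⟨fun hji => ?_, by simp [h]⟩
      rw [hji, hi] at h; norm_num at h

lemma prod_compl_neg {M : ℕ} (ξ : Fin M → ℤ) (hξ : ∀ i, ξ i = -1 ∨ ξ i = 1)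
    (i : Fin M) (hi : ξ i = -1) (w : Fin M → ℝ) :
    ∏ j ∈ {i}ᶜ, w j =
      (∏ p : {j // ξ j = 1}, w p.1)
        * ∏ q ∈ ({(⟨i, hi⟩ : {j // ξ j = -1})}ᶜ : Finset {j // ξ j = -1}), w q.1 := by
  rw [← Finset.prod_filter_mul_prod_filter_not ({i}ᶜ) (fun j => ξ j = 1)]
  congr 1
  · rw [Finset.prod_subtype (({i}ᶜ : Finset (Fin M)).filter fun j => ξ j = 1)
      (p := fun j => ξ j = 1) ?_ w]
    intro j
    simp only [Finset.mem_filter, Finset.mem_compl, Finset.mem_singleton]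
    constructor
    · rintro ⟨-, h⟩; exact h
    · intro h
      refine ⟨fun hji => ?_, h⟩
      rw [hji, hi] at h; norm_num at h
  · refine (Finset.prod_bij (fun p _ => p.1) ?_ ?_ ?_ (fun _ _ => rfl)).symm
    · intro p hp
      simp only [Finset.mem_compl, Finset.mem_singleton] at hp
      simp only [Finset.mem_filter, Finset.mem_compl, Finset.mem_singleton]
      refine ⟨fun h => hp (Subtype.ext h), by simp [p.2]⟩
    · intro p _ p' _ h
      exact Subtype.ext h
    · intro j hj
      simp only [Finset.mem_filter, Finset.mem_compl, Finset.mem_singleton] at hj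
      have hj2 : ξ j = -1 := by rcases hξ j with h | h <;> simp_all
      exact ⟨⟨j, hj2⟩, by simp [Subtype.ext_iff, hj.1], rfl⟩

lemma sq_cancel {a b : ℝ} (ha : 0 ≤ a) (hb : 0 ≤ b) (h : a^2 = b^2) : a = b := by
  have h2 : (a - b) * (a + b) = 0 := by nlinarith
  rcases mul_eq_zero.mp h2 with h3 | h3
  · linarith
  · linarith

lemma prod_compl_equiv {m : ℕ} {β : Type*} [Fintype β] [DecidableEq β] (e : Fin m ≃ β)
    (G : β → β → ℝ) : ∏ i, ∏ j ∈ {i}ᶜ, G (e i) (e j) = ∏ p, ∏ q ∈ {p}ᶜ, G p q := by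
  rw [← Equiv.prod_comp e (fun p => ∏ q ∈ {p}ᶜ, G p q)]
  refine Finset.prod_congr rfl fun i _ => ?_
  refine Finset.prod_bij (fun j _ => e j) ?_ ?_ ?_ (fun _ _ => rfl)
  · intro j hj
    simp only [Finset.mem_compl, Finset.mem_singleton] at hj ⊢
    exact fun h => hj (e.injective h)
  · intro j _ j' _ h
    exact e.injective h
  · intro q hq
    simp only [Finset.mem_compl, Finset.mem_singleton] at hq
    exact ⟨e.symm q, by simpa using fun h => hq (by rw [← h]; simp), by simp⟩

/-- Cauchy double alternant bound: for distinct `x₁,…,x_{2k} ∈ ℂ` and a balanced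
sign sequence `ξ ∈ {−1,+1}^{2k}`, with `P = {i : ξ i = +1}` and `N = {i : ξ i = −1}`,
`∏_{i<j} |x_i−x_j|^{ξ_i ξ_j/4} ≤ ∑_{π : P → N bijection} ∏_{i∈P} |x_i−x_{π(i)}|^{−1/4}`. -/
theorem stmt12 (k : ℕ) (x : Fin (2 * k) → ℂ) (hx : Function.Injective x)
    (ξ : Fin (2 * k) → ℤ) (hξ : ∀ i, ξ i = -1 ∨ ξ i = 1)
    (hbal : ∑ i, ξ i = 0) :
    (∏ i, ∏ j ∈ Finset.Ioi i, ‖x i - x j‖ ^ (((ξ i * ξ j : ℤ) : ℝ) / 4))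
      ≤ ∑ π : {i : Fin (2 * k) // ξ i = 1} ≃ {i : Fin (2 * k) // ξ i = -1},
          ∏ i : {i : Fin (2 * k) // ξ i = 1},
            ‖x i.1 - x (π i).1‖ ^ (-(1 / 4) : ℝ) := by
  classical
  -- the two sign classes have the same cardinality
  have hcard : Fintype.card {i : Fin (2*k) // ξ i = -1}
      = Fintype.card {i : Fin (2*k) // ξ i = 1} := by
    have h1 : ∑ i ∈ univ.filter (fun i => ξ i = 1), ξ i
        = ((univ.filter (fun i : Fin (2*k) => ξ i = 1)).card : ℤ) := by
      rw [Finset.sum_congr rfl (fun i hi => (Finset.mem_filter.mp hi).2)]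
      simp
    have h2 : ∑ i ∈ univ.filter (fun i => ¬ ξ i = 1), ξ i
        = -((univ.filter (fun i : Fin (2*k) => ¬ ξ i = 1)).card : ℤ) := by
      rw [Finset.sum_congr rfl (fun i hi => show ξ i = -1 from ?_)]
      · simp
      · rcases hξ i with h | h
        · exact h
        · exact absurd h (Finset.mem_filter.mp hi).2
    have h3 := Finset.sum_filter_add_sum_filter_not univ (fun i => ξ i = 1) ξ
    rw [hbal, h1, h2] at h3
    have h4 : (univ.filter (fun i : Fin (2*k) => ξ i = 1)).card
        = (univ.filter (fun i : Fin (2*k) => ¬ ξ i = 1)).card := by omega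
    have h5 : (univ.filter (fun i : Fin (2*k) => ¬ ξ i = 1))
        = (univ.filter (fun i : Fin (2*k) => ξ i = -1)) := by
      ext i
      rcases hξ i with h | h <;> simp [h]
    rw [Fintype.card_subtype, Fintype.card_subtype, h4, h5]
  set m := Fintype.card {i : Fin (2*k) // ξ i = 1} with hm
  let eP : Fin m ≃ {i : Fin (2*k) // ξ i = 1} := (Fintype.equivFin _).symm
  let eN : Fin m ≃ {i : Fin (2*k) // ξ i = -1} := (Fintype.equivFinOfCardEq hcard).symm
  set a : Fin m → ℂ := fun i => x (eP i).1 with haa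
  set b : Fin m → ℂ := fun j => x (eN j).1 with hbb
  have hd : ∀ i j, a i - b j ≠ 0 := by
    intro i j
    refine sub_ne_zero_of_ne fun h => ?_
    have h2 := hx h
    have h3 := (eP i).2
    rw [h2, (eN j).2] at h3
    norm_num at h3
  have hxne : ∀ i j : Fin (2*k), i ≠ j → x i - x j ≠ 0 :=
    fun i j hij => sub_ne_zero_of_ne (hx.ne hij)
  have hFpos : ∀ i j : Fin (2*k), i ≠ j → 0 < ‖x i - x j‖ :=
    fun i j hij => norm_pos_iff.mpr (hxne i j hij)
  -- abbreviations
  set A : ℝ := ∏ i, ∏ j ∈ Ioi i, (if ξ j = ξ i then ‖x i - x j‖ else 1) with hA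
  set B : ℝ := ∏ i, ∏ j ∈ Ioi i, (if ξ j = ξ i then 1 else ‖x i - x j‖) with hB
  set PP : ℝ := ∏ i : Fin m, ∏ j ∈ Ioi i, ‖a i - a j‖ with hPP
  set NN : ℝ := ∏ i : Fin m, ∏ j ∈ Ioi i, ‖b i - b j‖ with hNN
  set CR : ℝ := ∏ i : Fin m, ∏ j : Fin m, ‖a i - b j‖ with hCR
  -- Step 1 : LHS = (A / B) ^ (1/4)
  have step1 : (∏ i, ∏ j ∈ Finset.Ioi i, ‖x i - x j‖ ^ (((ξ i * ξ j : ℤ) : ℝ) / 4))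
      = (A / B) ^ ((1:ℝ)/4) := by
    have cell : ∀ i j : Fin (2*k), i ≠ j →
        ‖x i - x j‖ ^ (((ξ i * ξ j : ℤ) : ℝ) / 4)
          = ((if ξ j = ξ i then ‖x i - x j‖ else 1)
              / (if ξ j = ξ i then 1 else ‖x i - x j‖)) ^ ((1:ℝ)/4) := by
      intro i j hij
      rcases hξ i with hi | hi <;> rcases hξ j with hj | hj
      · have h1 : ((ξ i * ξ j : ℤ) : ℝ) / 4 = (1:ℝ)/4 := by rw [hi, hj]; norm_num
        rw [h1, if_pos (hj.trans hi.symm), if_pos (hj.trans hi.symm), div_one]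
      · have h1 : ((ξ i * ξ j : ℤ) : ℝ) / 4 = -((1:ℝ)/4) := by rw [hi, hj]; norm_num
        have h2 : ¬ (ξ j = ξ i) := by rw [hi, hj]; norm_num
        rw [h1, if_neg h2, if_neg h2,
          show (1:ℝ) / ‖x i - x j‖ = ‖x i - x j‖⁻¹ from one_div _,
          Real.inv_rpow (norm_nonneg _), ← Real.rpow_neg (norm_nonneg _)]
      · have h1 : ((ξ i * ξ j : ℤ) : ℝ) / 4 = -((1:ℝ)/4) := by rw [hi, hj]; norm_num
        have h2 : ¬ (ξ j = ξ i) := by rw [hi, hj]; norm_num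
        rw [h1, if_neg h2, if_neg h2,
          show (1:ℝ) / ‖x i - x j‖ = ‖x i - x j‖⁻¹ from one_div _,
          Real.inv_rpow (norm_nonneg _), ← Real.rpow_neg (norm_nonneg _)]
      · have h1 : ((ξ i * ξ j : ℤ) : ℝ) / 4 = (1:ℝ)/4 := by rw [hi, hj]; norm_num
        rw [h1, if_pos (hj.trans hi.symm), if_pos (hj.trans hi.symm), div_one]
    have hnn : ∀ i j : Fin (2*k), (0:ℝ) ≤ (if ξ j = ξ i then ‖x i - x j‖ else 1)
        / (if ξ j = ξ i then 1 else ‖x i - x j‖) := by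
      intro i j
      apply div_nonneg <;> (split_ifs <;> first | exact norm_nonneg _ | exact zero_le_one)
    calc (∏ i, ∏ j ∈ Finset.Ioi i, ‖x i - x j‖ ^ (((ξ i * ξ j : ℤ) : ℝ) / 4))
        = ∏ i, ∏ j ∈ Finset.Ioi i, ((if ξ j = ξ i then ‖x i - x j‖ else 1)
            / (if ξ j = ξ i then 1 else ‖x i - x j‖)) ^ ((1:ℝ)/4) :=
          Finset.prod_congr rfl fun i _ => Finset.prod_congr rfl fun j hj =>
            cell i j (ne_of_lt (Finset.mem_Ioi.mp hj))
      _ = ∏ i, (∏ j ∈ Finset.Ioi i, ((if ξ j = ξ i then ‖x i - x j‖ else 1)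
            / (if ξ j = ξ i then 1 else ‖x i - x j‖))) ^ ((1:ℝ)/4) :=
          Finset.prod_congr rfl fun i _ =>
            Real.finset_prod_rpow _ _ (fun j _ => hnn i j) _
      _ = (∏ i, ∏ j ∈ Finset.Ioi i, ((if ξ j = ξ i then ‖x i - x j‖ else 1)
            / (if ξ j = ξ i then 1 else ‖x i - x j‖))) ^ ((1:ℝ)/4) :=
          Real.finset_prod_rpow _ _
            (fun i _ => Finset.prod_nonneg fun j _ => hnn i j) _
      _ = (A / B) ^ ((1:ℝ)/4) := by
          rw [hA, hB, ← Finset.prod_div_distrib]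
          congr 1
          exact Finset.prod_congr rfl fun i _ => Finset.prod_div_distrib _ _
  -- Step 2 : A = PP * NN
  have step2 : A = PP * NN := by
    have hwsymm : ∀ i j : Fin (2*k),
        (if ξ j = ξ i then ‖x i - x j‖ else 1) = (if ξ i = ξ j then ‖x j - x i‖ else 1) := by
      intro i j
      by_cases h : ξ j = ξ i
      · rw [if_pos h, if_pos h.symm, norm_sub_rev]
      · rw [if_neg h, if_neg (fun hh => h hh.symm)]
    have hA2 : A ^ 2 = (∏ p : {j : Fin (2*k) // ξ j = 1}, ∏ p' ∈ ({p}ᶜ : Finset _), ‖x p.1 - x p'.1‖)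
        * (∏ q : {j : Fin (2*k) // ξ j = -1}, ∏ q' ∈ ({q}ᶜ : Finset _), ‖x q.1 - x q'.1‖) := by
      rw [hA, sq_prod_Ioi _ hwsymm,
        prod_split_sign ξ hξ
          (fun i => ∏ j ∈ ({i}ᶜ : Finset _), if ξ j = ξ i then ‖x i - x j‖ else 1)]
      congr 1
      · refine Finset.prod_congr rfl fun p _ => ?_
        refine (prod_compl_pos ξ hξ p.1 p.2 _).trans ?_
        refine (congrArg₂ (· * ·) ?_ ?_).trans (mul_one _)
        · exact Finset.prod_congr rfl fun p' _ => if_pos (p'.2.trans p.2.symm)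
        · exact Finset.prod_eq_one fun q _ => if_neg (by rw [q.2, p.2]; norm_num)
      · refine Finset.prod_congr rfl fun q _ => ?_
        refine (prod_compl_neg ξ hξ q.1 q.2 _).trans ?_
        refine (congrArg₂ (· * ·) ?_ ?_).trans (one_mul _)
        · exact Finset.prod_eq_one fun p _ => if_neg (by rw [p.2, q.2]; norm_num)
        · exact Finset.prod_congr rfl fun q' _ => if_pos (q'.2.trans q.2.symm)
    have hPP2 : PP ^ 2
        = ∏ p : {j : Fin (2*k) // ξ j = 1}, ∏ p' ∈ ({p}ᶜ : Finset _), ‖x p.1 - x p'.1‖ := by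
      rw [hPP, sq_prod_Ioi _ (fun i j => norm_sub_rev _ _)]
      exact prod_compl_equiv eP (fun p p' => ‖x p.1 - x p'.1‖)
    have hNN2 : NN ^ 2
        = ∏ q : {j : Fin (2*k) // ξ j = -1}, ∏ q' ∈ ({q}ᶜ : Finset _), ‖x q.1 - x q'.1‖ := by
      rw [hNN, sq_prod_Ioi _ (fun i j => norm_sub_rev _ _)]
      exact prod_compl_equiv eN (fun q q' => ‖x q.1 - x q'.1‖)
    have hAnn : 0 ≤ A := by
      rw [hA]
      refine Finset.prod_nonneg fun i _ => Finset.prod_nonneg fun j _ => ?_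
      split_ifs
      exacts [norm_nonneg _, zero_le_one]
    have hPPnn : 0 ≤ PP := by
      rw [hPP]
      exact Finset.prod_nonneg fun i _ => Finset.prod_nonneg fun j _ => norm_nonneg _
    have hNNnn : 0 ≤ NN := by
      rw [hNN]
      exact Finset.prod_nonneg fun i _ => Finset.prod_nonneg fun j _ => norm_nonneg _
    exact sq_cancel hAnn (mul_nonneg hPPnn hNNnn) (by rw [mul_pow, hPP2, hNN2, hA2])
  -- Step 3 : B = CR
  have step3 : B = CR := by
    have hvsymm : ∀ i j : Fin (2*k),
        (if ξ j = ξ i then 1 else ‖x i - x j‖) = (if ξ i = ξ j then 1 else ‖x j - x i‖) := by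
      intro i j
      by_cases h : ξ j = ξ i
      · rw [if_pos h, if_pos h.symm]
      · rw [if_neg h, if_neg (fun hh => h hh.symm), norm_sub_rev]
    have hB2 : B ^ 2 = (∏ p : {j : Fin (2*k) // ξ j = 1}, ∏ q : {j : Fin (2*k) // ξ j = -1},
          ‖x p.1 - x q.1‖)
        * ∏ q : {j : Fin (2*k) // ξ j = -1}, ∏ p : {j : Fin (2*k) // ξ j = 1},
          ‖x q.1 - x p.1‖ := by
      rw [hB, sq_prod_Ioi _ hvsymm,
        prod_split_sign ξ hξ
          (fun i => ∏ j ∈ ({i}ᶜ : Finset _), if ξ j = ξ i then 1 else ‖x i - x j‖)]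
      congr 1
      · refine Finset.prod_congr rfl fun p _ => ?_
        refine (prod_compl_pos ξ hξ p.1 p.2 _).trans ?_
        refine (congrArg₂ (· * ·) ?_ ?_).trans (one_mul _)
        · exact Finset.prod_eq_one fun p' _ => if_pos (p'.2.trans p.2.symm)
        · exact Finset.prod_congr rfl fun q _ => if_neg (by rw [q.2, p.2]; norm_num)
      · refine Finset.prod_congr rfl fun q _ => ?_
        refine (prod_compl_neg ξ hξ q.1 q.2 _).trans ?_
        refine (congrArg₂ (· * ·) ?_ ?_).trans (mul_one _)
        · exact Finset.prod_congr rfl fun p _ => if_neg (by rw [p.2, q.2]; norm_num)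
        · exact Finset.prod_eq_one fun q' _ => if_pos (q'.2.trans q.2.symm)
    have hCR' : CR = ∏ p : {j : Fin (2*k) // ξ j = 1}, ∏ q : {j : Fin (2*k) // ξ j = -1},
        ‖x p.1 - x q.1‖ := by
      rw [hCR]
      calc ∏ i : Fin m, ∏ j : Fin m, ‖a i - b j‖
          = ∏ i : Fin m, ∏ q : {j : Fin (2*k) // ξ j = -1}, ‖a i - x q.1‖ :=
            Finset.prod_congr rfl fun i _ =>
              Equiv.prod_comp eN (fun q => ‖a i - x q.1‖)
        _ = ∏ p : {j : Fin (2*k) // ξ j = 1}, ∏ q : {j : Fin (2*k) // ξ j = -1},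
              ‖x p.1 - x q.1‖ :=
            Equiv.prod_comp eP (fun p => ∏ q : {j : Fin (2*k) // ξ j = -1}, ‖x p.1 - x q.1‖)
    have hswap : (∏ q : {j : Fin (2*k) // ξ j = -1}, ∏ p : {j : Fin (2*k) // ξ j = 1},
        ‖x q.1 - x p.1‖) = ∏ p : {j : Fin (2*k) // ξ j = 1}, ∏ q : {j : Fin (2*k) // ξ j = -1},
        ‖x p.1 - x q.1‖ := by
      rw [Finset.prod_comm]
      exact Finset.prod_congr rfl fun p _ => Finset.prod_congr rfl fun q _ => norm_sub_rev _ _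
    have hBnn : 0 ≤ B := by
      rw [hB]
      refine Finset.prod_nonneg fun i _ => Finset.prod_nonneg fun j _ => ?_
      split_ifs
      exacts [zero_le_one, norm_nonneg _]
    have hCRnn : 0 ≤ CR := by
      rw [hCR]
      exact Finset.prod_nonneg fun i _ => Finset.prod_nonneg fun j _ => norm_nonneg _
    refine sq_cancel hBnn hCRnn ?_
    rw [hB2, hswap, ← hCR', sq]
  -- Step 4 : Cauchy determinant
  set D : ℂ := (Matrix.of fun i j => (a i - b j)⁻¹).det with hD
  have step4 : ‖D‖ = PP * NN / CR := by
    rw [hD, cauchy_det m a b hd, norm_div]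
    congr 1
    · rw [norm_prod]
      rw [show (∏ i : Fin m, ‖∏ j ∈ Ioi i, ((a j - a i) * (b i - b j))‖)
          = ∏ i : Fin m, ∏ j ∈ Ioi i, (‖a i - a j‖ * ‖b i - b j‖) from
        Finset.prod_congr rfl fun i _ => by
          rw [norm_prod]
          exact Finset.prod_congr rfl fun j _ => by
            rw [norm_mul, norm_sub_rev (a j) (a i)]]
      rw [hPP, hNN, ← Finset.prod_mul_distrib]
      exact Finset.prod_congr rfl fun i _ => Finset.prod_mul_distrib
    · rw [norm_prod, hCR]
      exact Finset.prod_congr rfl fun i _ => norm_prod _ _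
  -- Step 6 : Hadamard-type bound
  have step6 : ‖D‖ ≤ ∑ σ : Equiv.Perm (Fin m), ∏ i, ‖a (σ i) - b i‖⁻¹ := by
    have hdet : D = ∑ σ : Equiv.Perm (Fin m),
        Equiv.Perm.sign σ • ∏ i, (a (σ i) - b i)⁻¹ := by
      rw [hD, Matrix.det_apply]
      rfl
    rw [hdet]
    refine (norm_sum_le _ _).trans (le_of_eq (Finset.sum_congr rfl fun σ _ => ?_))
    have hs : ‖(Equiv.Perm.sign σ : ℤˣ) • ∏ i, (a (σ i) - b i)⁻¹‖
        = ‖∏ i, (a (σ i) - b i)⁻¹‖ := by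
      rcases Int.units_eq_one_or (Equiv.Perm.sign σ) with h | h <;> simp [h]
    rw [hs, norm_prod]
    exact Finset.prod_congr rfl fun i _ => norm_inv _
  -- Step 8 : reindex the sum
  have step8 : ∑ σ : Equiv.Perm (Fin m), ∏ i, ‖a (σ i) - b i‖ ^ (-(1 / 4) : ℝ)
      = ∑ π : {i : Fin (2 * k) // ξ i = 1} ≃ {i : Fin (2 * k) // ξ i = -1},
          ∏ i : {i : Fin (2 * k) // ξ i = 1},
            ‖x i.1 - x (π i).1‖ ^ (-(1 / 4) : ℝ) := by
    let invE : ({i : Fin (2*k) // ξ i = 1} ≃ {i : Fin (2*k) // ξ i = -1})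
        ≃ ({i : Fin (2*k) // ξ i = -1} ≃ {i : Fin (2*k) // ξ i = 1}) :=
      ⟨Equiv.symm, Equiv.symm, fun π => by simp, fun π => by simp⟩
    let Φ := invE.trans (Equiv.equivCongr eN.symm eP.symm)
    rw [← Equiv.sum_comp Φ (fun σ => ∏ i, ‖a (σ i) - b i‖ ^ (-(1 / 4) : ℝ))]
    refine Finset.sum_congr rfl fun π _ => ?_
    have h1 : ∀ i, a (Φ π i) = x (π.symm (eN i)).1 := by
      intro i
      show x (eP (eP.symm (π.symm (eN i)))).1 = _
      rw [Equiv.apply_symm_apply]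
    calc (∏ i, ‖a (Φ π i) - b i‖ ^ (-(1 / 4) : ℝ))
        = ∏ i, ‖x (π.symm (eN i)).1 - x (eN i).1‖ ^ (-(1 / 4) : ℝ) :=
          Finset.prod_congr rfl fun i _ => by rw [h1 i]
      _ = ∏ q : {i : Fin (2*k) // ξ i = -1}, ‖x (π.symm q).1 - x q.1‖ ^ (-(1 / 4) : ℝ) :=
          Equiv.prod_comp eN (fun q => ‖x (π.symm q).1 - x q.1‖ ^ (-(1 / 4) : ℝ))
      _ = ∏ p : {i : Fin (2*k) // ξ i = 1}, ‖x p.1 - x (π p).1‖ ^ (-(1 / 4) : ℝ) := by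
          rw [← Equiv.prod_comp π
            (fun q => ‖x (π.symm q).1 - x q.1‖ ^ (-(1 / 4) : ℝ))]
          exact Finset.prod_congr rfl fun p _ => by rw [Equiv.symm_apply_apply]
  -- assemble
  rw [step1, step2, step3, ← step4, ← step8]
  calc ‖D‖ ^ ((1:ℝ)/4)
      ≤ (∑ σ : Equiv.Perm (Fin m), ∏ i, ‖a (σ i) - b i‖⁻¹) ^ ((1:ℝ)/4) :=
        Real.rpow_le_rpow (norm_nonneg _) step6 (by norm_num)
    _ ≤ ∑ σ : Equiv.Perm (Fin m), (∏ i, ‖a (σ i) - b i‖⁻¹) ^ ((1:ℝ)/4) :=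
        rpow_sum_le _ _ (fun σ _ => Finset.prod_nonneg fun i _ =>
          inv_nonneg.mpr (norm_nonneg _))
    _ = ∑ σ : Equiv.Perm (Fin m), ∏ i, ‖a (σ i) - b i‖ ^ (-(1 / 4) : ℝ) := by
        refine Finset.sum_congr rfl fun σ _ => ?_
        rw [← Real.finset_prod_rpow _ _ (fun i _ => inv_nonneg.mpr (norm_nonneg _))]
        refine Finset.prod_congr rfl fun i _ => ?_
        rw [Real.inv_rpow (norm_nonneg _), ← Real.rpow_neg (norm_nonneg _)]
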